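/- Let X be a closed topological manifold of dimension n and let L : E → F be a bundle morphism between real vector bundles of the same fibre dimension over X, where E is orientable and F is non-orientable (or vice versa). Then the covering dimension of Σ(L) is at least n − 1. -/

import Mathlib

set_option autoImplicit false

noncomputable section

open Bundle Set Module

/-- `HasCovDimLE Y m` : every finite open cover of `Y` has a finite open refinement in which
no point is included in more than `m + 1` elements. -/
def HasCovDimLE (Y : Type) [TopologicalSpace Y] (m : ℕ) : Prop :=
  ∀ U : Finset (Set Y), (∀ u ∈ U, IsOpen u) → ⋃₀ (U : Set (Set Y)) = Set.univ →
    ∃ V : Finset (Set Y), (∀ v ∈ V, IsOpen v) ∧ ⋃₀ (V : Set (Set Y)) = Set.univ ∧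
      (∀ v ∈ V, ∃ u ∈ U, v ⊆ u) ∧
      ∀ y : Y, {v ∈ (V : Set (Set Y)) | y ∈ v}.ncard ≤ m + 1

/-- The covering dimension of a topological space, as an element of `ℕ∞` (`⊤` if no finite
`m` works). -/
def covDim (Y : Type) [TopologicalSpace Y] : ℕ∞ :=
  sInf {d : ℕ∞ | ∃ m : ℕ, d = (m : ℕ∞) ∧ HasCovDimLE Y m}

/-- The underlying graded groups of: relative singular homology `H_k(Y, A; R)` (with
`H_k(Y; R) = H_k(Y, ∅; R)`), singular cohomology `H^k(Y; G)`, Čech cohomology `Ȟ^k(Y; R)`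
and the `Ext`-term `Ext¹_R(H_{k-1}(Y; R), G)` of the universal coefficient theorem. -/
structure CohomologyData (R : Type) [CommRing R] (G : Type) [AddCommGroup G] [Module R G] where
  /-- relative singular homology `H_k(Y, A; R)` -/
  Hrel : ∀ (Y : Type) [TopologicalSpace Y], Set Y → ℤ → Type
  instHrelAdd : ∀ (Y : Type) [TopologicalSpace Y] (A : Set Y) (k : ℤ), AddCommGroup (Hrel Y A k)
  instHrelMod : ∀ (Y : Type) [TopologicalSpace Y] (A : Set Y) (k : ℤ), Module R (Hrel Y A k)
  /-- singular cohomology `H^k(Y; G)` -/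
  Hco : ∀ (Y : Type) [TopologicalSpace Y], ℤ → Type
  instHcoAdd : ∀ (Y : Type) [TopologicalSpace Y] (k : ℤ), AddCommGroup (Hco Y k)
  /-- Čech cohomology `Ȟ^k(Y; R)` -/
  Hcech : ∀ (Y : Type) [TopologicalSpace Y], ℤ → Type
  instHcechAdd : ∀ (Y : Type) [TopologicalSpace Y] (k : ℤ), AddCommGroup (Hcech Y k)
  /-- the group `Ext¹_R(H_{k-1}(Y; R), G)` appearing in the universal coefficient theorem -/
  ExtUCT : ∀ (Y : Type) [TopologicalSpace Y], ℤ → Type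
  instExtAdd : ∀ (Y : Type) [TopologicalSpace Y] (k : ℤ), AddCommGroup (ExtUCT Y k)

attribute [instance] CohomologyData.instHrelAdd CohomologyData.instHrelMod
  CohomologyData.instHcoAdd CohomologyData.instHcechAdd CohomologyData.instExtAdd

/-- An axiomatization of the package consisting of singular homology of pairs (with
coefficients in a PID `R`), singular cohomology (with coefficients in an `R`-module `G`) and
Čech cohomology (with coefficients in `R`), together with: functoriality, the Kronecker
pairing `α` (written `pair`, `α^k(η)(ξ) = ⟨η, ξ⟩`) and its naturality, the universal
coefficient exact sequence
`0 → Ext¹_R(H_{k-1}(Y;R), G) →^{β^k} H^k(Y;G) →^{α^k} Hom_R(H_k(Y;R), G) → 0`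
(exactness at `H^k` and vanishing of the `Ext`-term on free homology), the homology long
exact sequence of a pair (the part `im j_* = ker π_*`), and the fact that non-vanishing of
`Ȟ^m` of a compact Hausdorff space forces its covering dimension to be at least `m`.
All of these are classical facts about the (co)homology of topological spaces; they are the
only properties used in the paper. -/
structure Theory (R : Type) [CommRing R] [IsDomain R] [IsPrincipalIdealRing R]
    (G : Type) [AddCommGroup G] [Module R G] extends CohomologyData R G where
  /-- functoriality of relative homology for maps of pairs -/
  hmap : ∀ {Y Z : Type} [TopologicalSpace Y] [TopologicalSpace Z]
    (f : C(Y, Z)) {A : Set Y} {B : Set Z}, Set.MapsTo f A B →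
    ∀ k : ℤ, Hrel Y A k →ₗ[R] Hrel Z B k
  /-- contravariant functoriality of singular cohomology -/
  cmap : ∀ {Y Z : Type} [TopologicalSpace Y] [TopologicalSpace Z]
    (f : C(Y, Z)) (k : ℤ), Hco Z k →+ Hco Y k
  cmap_id : ∀ (Y : Type) [TopologicalSpace Y] (k : ℤ) (x : Hco Y k),
    cmap (ContinuousMap.id Y) k x = x
  /-- contravariant functoriality of Čech cohomology -/
  ccmap : ∀ {Y Z : Type} [TopologicalSpace Y] [TopologicalSpace Z]
    (f : C(Y, Z)) (k : ℤ), Hcech Z k →+ Hcech Y k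
  /-- the Kronecker pairing `α^k : H^k(Y;G) → Hom_R(H_k(Y;R), G)`, `α^k(η)(ξ) = ⟨η, ξ⟩` -/
  pair : ∀ (Y : Type) [TopologicalSpace Y] (k : ℤ),
    Hco Y k →+ (Hrel Y (∅ : Set Y) k →ₗ[R] G)
  /-- naturality of the Kronecker pairing: `⟨f^*η, ξ⟩ = ⟨η, f_*ξ⟩` -/
  pair_natural : ∀ {Y Z : Type} [TopologicalSpace Y] [TopologicalSpace Z] (f : C(Y, Z)) (k : ℤ)
    (η : Hco Z k) (ξ : Hrel Y (∅ : Set Y) k),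
    pair Y k (cmap f k η) ξ = pair Z k η (hmap f (Set.mapsTo_empty _ _) k ξ)
  /-- the map `β^k : Ext¹_R(H_{k-1}(Y;R), G) → H^k(Y;G)` of the universal coefficient
  theorem -/
  betaMap : ∀ (Y : Type) [TopologicalSpace Y] (k : ℤ), ExtUCT Y k →+ Hco Y k
  /-- exactness of the universal coefficient sequence at `H^k(Y;G)`: `ker α^k = im β^k` -/
  uct_exact : ∀ (Y : Type) [TopologicalSpace Y] (k : ℤ) (x : Hco Y k),
    pair Y k x = 0 ↔ x ∈ Set.range (betaMap Y k)
  /-- `Ext¹_R(H_{k-1}(Y;R), G)` vanishes if `H_{k-1}(Y;R)` is a free `R`-module -/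
  uct_free : ∀ (Y : Type) [TopologicalSpace Y] (k : ℤ),
    Module.Free R (Hrel Y (∅ : Set Y) (k - 1)) → ∀ z : ExtUCT Y k, betaMap Y k z = 0
  /-- exactness of the long exact homology sequence of the pair `(X, X ∖ A)` at `H_k(X)`:
  `π_* ξ = 0` iff `ξ` comes from `H_k(X ∖ A)` -/
  les_exact : ∀ (X : Type) [TopologicalSpace X] (A : Set X) (k : ℤ)
    (ξ : Hrel X (∅ : Set X) k),
    hmap (ContinuousMap.id X) (Set.mapsTo_empty _ _) k ξ = (0 : Hrel X Aᶜ k) ↔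
      ∃ ζ : Hrel (↥(Aᶜ)) (∅ : Set ↥(Aᶜ)) k,
        hmap (⟨Subtype.val, continuous_subtype_val⟩ : C(↥(Aᶜ), X))
          (Set.mapsTo_empty _ _) k ζ = ξ
  /-- if the Čech cohomology `Ȟ^m(Y;R)` of a compact Hausdorff space is non-trivial
  then its covering dimension is at least `m` -/
  dim_cech : ∀ (Y : Type) [TopologicalSpace Y] [CompactSpace Y] [T2Space Y] (m : ℕ),
    (∃ x : Hcech Y (m : ℤ), x ≠ 0) → (m : ℕ∞) ≤ covDim Y

/-- `X` is `R`-orientable (with respect to the homology theory `T`) if there is a compatible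
continuous choice `o(λ)` of generators of the local homology modules
`H_n(X, X ∖ {λ}; R) ≅ R`: i.e. an open cover `{U_i}` of `X` and classes
`μ_i ∈ H_n(X, X ∖ U_i; R)` restricting to `o(λ)` for every `λ ∈ U_i`. -/
def ROrientable {R : Type} [CommRing R] [IsDomain R] [IsPrincipalIdealRing R]
    {G : Type} [AddCommGroup G] [Module R G] (T : Theory R G)
    (n : ℕ) (X : Type) [TopologicalSpace X] : Prop :=
  ∃ o : ∀ x : X, T.Hrel X ({x}ᶜ) (n : ℤ),
    (∀ x, Submodule.span R {o x} = ⊤) ∧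
    ∃ (ι : Type) (U : ι → Set X), (∀ i, IsOpen (U i)) ∧ (∀ x, ∃ i, x ∈ U i) ∧
      ∃ μ : ∀ i, T.Hrel X ((U i)ᶜ) (n : ℤ),
        ∀ (i) (x) (hx : x ∈ U i),
          T.hmap (ContinuousMap.id X)
            ((Set.mapsTo_id _).mono_right
              (Set.compl_subset_compl.mpr (Set.singleton_subset_iff.mpr hx)))
            (n : ℤ) (μ i) = o x

/-- The full package: the (co)homology theories together with Poincaré–Lefschetz duality for
closed `R`-orientable topological `n`-manifolds (in the form of [Bredon, Cor. VI.8.4]: for a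
closed subset `A ⊆ X` there is a commutative square consisting of the duality isomorphisms
`Ȟ^{n-k}(X;R) ≅ H_k(X;R)` and `Ȟ^{n-k}(A;R) ≅ H_k(X, X∖A;R)`, the restriction
`i^* : Ȟ^{n-k}(X;R) → Ȟ^{n-k}(A;R)` and `π_* : H_k(X;R) → H_k(X, X∖A;R)`), and the fact
that every closed topological manifold is `R`-orientable when `2 = 0` in `R`. -/
structure GoodTheory (R : Type) [CommRing R] [IsDomain R] [IsPrincipalIdealRing R]
    (G : Type) [AddCommGroup G] [Module R G] extends Theory R G where
  /-- Poincaré–Lefschetz duality -/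
  pd : ∀ (n : ℕ) (X : Type) [TopologicalSpace X] [T2Space X]
    [ChartedSpace (EuclideanSpace ℝ (Fin n)) X] [CompactSpace X],
    ROrientable toTheory n X →
    ∀ (k : ℤ) (A : Set X), IsClosed A →
      ∃ (pdX : Hcech X ((n : ℤ) - k) ≃+ Hrel X (∅ : Set X) k)
        (pdA : Hcech (↥A) ((n : ℤ) - k) ≃+ Hrel X Aᶜ k),
        ∀ η : Hcech X ((n : ℤ) - k),
          pdA (ccmap (⟨Subtype.val, continuous_subtype_val⟩ : C(↥A, X)) ((n : ℤ) - k) η) =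
          hmap (ContinuousMap.id X) (Set.mapsTo_empty _ _) k (pdX η)
  /-- every closed topological manifold is `R`-orientable if `2 = 0` in `R` -/
  orient_two : (2 : R) = 0 → ∀ (n : ℕ) (X : Type) [TopologicalSpace X] [T2Space X]
    [ChartedSpace (EuclideanSpace ℝ (Fin n)) X] [CompactSpace X],
    ROrientable toTheory n X

/-- A (finite rank) vector bundle over the base `Y` with scalar field `𝕜`, packaged as a
structure: a model fibre `F` and a family of fibres `E y` together with all the data making
it a topological vector bundle. -/
structure VB (𝕜 : Type) [NontriviallyNormedField 𝕜] (Y : Type) [TopologicalSpace Y] :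
    Type 1 where
  /-- the model fibre -/
  F : Type
  [nF : NormedAddCommGroup F]
  [sF : NormedSpace 𝕜 F]
  [fdF : FiniteDimensional 𝕜 F]
  /-- the fibres -/
  E : Y → Type
  [aE : ∀ y, AddCommGroup (E y)]
  [mE : ∀ y, Module 𝕜 (E y)]
  [tE : ∀ y, TopologicalSpace (E y)]
  [tT : TopologicalSpace (Bundle.TotalSpace F E)]
  [fb : FiberBundle F E]
  [vb : VectorBundle 𝕜 F E]

attribute [instance] VB.nF VB.sF VB.fdF VB.aE VB.mE VB.tE VB.tT VB.fb VB.vb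

/-- A morphism of vector bundles over `X`: a fibrewise (continuous) linear map which is
continuous as a map of total spaces. -/
def IsBundleMorphism {𝕜 : Type} [NontriviallyNormedField 𝕜] {X : Type} [TopologicalSpace X]
    (V W : VB 𝕜 X) (L : ∀ x, V.E x →L[𝕜] W.E x) : Prop :=
  Continuous fun p : Bundle.TotalSpace V.F V.E =>
    (Bundle.TotalSpace.mk p.1 (L p.1 p.2) : Bundle.TotalSpace W.F W.E)

/-- The singular set `Σ(L) = {λ ∈ X | L_λ ∉ GL(E_λ, F_λ)}` of a bundle morphism `L`:
the set of points of the base over which `L` is not a linear isomorphism of fibres. -/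
def singularSet {𝕜 : Type} [NontriviallyNormedField 𝕜] {X : Type} [TopologicalSpace X]
    (V W : VB 𝕜 X) (L : ∀ x, V.E x →L[𝕜] W.E x) : Set X :=
  {x : X | ¬ Function.Bijective (L x)}

/-- An `H^k(·;G)`-valued characteristic class `c`: it assigns to every vector bundle over a
base `Y` a class `c(E) ∈ H^k(Y;G)`, such that `c(E₁) = f^* c(E₂)` whenever a continuous map
`f : Y → Z` is covered by a (fibrewise isomorphic, continuous) bundle map `E₁ → E₂`. -/
structure CharClass {R : Type} [CommRing R] [IsDomain R] [IsPrincipalIdealRing R]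
    {G : Type} [AddCommGroup G] [Module R G] (T : GoodTheory R G)
    (𝕜 : Type) [NontriviallyNormedField 𝕜] (k : ℤ) where
  /-- the value of the characteristic class on a bundle -/
  cls : ∀ (Y : Type) [TopologicalSpace Y], VB 𝕜 Y → T.Hco Y k
  /-- naturality with respect to bundle maps covering continuous maps -/
  natural : ∀ (Y Z : Type) [TopologicalSpace Y] [TopologicalSpace Z]
    (V : VB 𝕜 Y) (W : VB 𝕜 Z) (f : C(Y, Z)) (φ : ∀ y, V.E y ≃ₗ[𝕜] W.E (f y)),
    Continuous (fun p : Bundle.TotalSpace V.F V.E =>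
      (Bundle.TotalSpace.mk (f p.1) (φ p.1 p.2) : Bundle.TotalSpace W.F W.E)) →
    cls Y V = T.cmap f k (cls Z W)

/-- `o` is an orientation of the real vector bundle `V` of rank `r`: a function assigning an
orientation to each fibre in such a way that near each point of the base the local
trivialization carries the orientations of the fibres into one fixed orientation of the
model fibre. -/
def IsBundleOrientation {Y : Type} [TopologicalSpace Y] (r : ℕ) (V : VB ℝ Y)
    (o : ∀ y, Orientation ℝ (V.E y) (Fin r)) : Prop :=
  ∀ y₀ : Y, ∃ ω : Orientation ℝ V.F (Fin r),
    ∀ (y) (hy : y ∈ (trivializationAt V.F V.E y₀).baseSet),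
      Orientation.map (Fin r)
        ((trivializationAt V.F V.E y₀).continuousLinearEquivAt ℝ y hy).toLinearEquiv
        (o y) = ω

/-- A real vector bundle is orientable if it admits an orientation. -/
def BundleOrientable {Y : Type} [TopologicalSpace Y] (V : VB ℝ Y) : Prop :=
  ∃ o : ∀ y, Orientation ℝ (V.E y) (Fin (Module.finrank ℝ V.F)),
    IsBundleOrientation (Module.finrank ℝ V.F) V o

-- auxiliary lemmas to be inserted above the theorem
section Aux

open Bundle Set Module

/-- Bijectivity of an endomorphism of a finite-dimensional vector space is equivalent to
non-vanishing of its determinant. -/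
theorem bijective_iff_det_ne_zero {M : Type} [AddCommGroup M] [Module ℝ M]
    [FiniteDimensional ℝ M] (f : M →ₗ[ℝ] M) :
    Function.Bijective f ↔ LinearMap.det f ≠ 0 := by
  constructor
  · intro h
    have hc : ((LinearEquiv.ofBijective f h : M ≃ₗ[ℝ] M) : M →ₗ[ℝ] M) = f := by
      ext x; rfl
    have := (LinearEquiv.ofBijective f h).isUnit_det'
    rw [hc] at this
    exact isUnit_iff_ne_zero.mp this
  · intro h
    have hc : ⇑(f.equivOfDetNeZero h) = ⇑f := by
      ext x
      simp [LinearMap.equivOfDetNeZero, LinearEquiv.ofIsUnitDet_apply]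
    have := (f.equivOfDetNeZero h).bijective
    rwa [hc] at this

/-- The singular set of a bundle morphism between vector bundles with fibres of the same
finite rank is closed. -/
theorem isClosed_singularSet {X : Type} [TopologicalSpace X] (V W : VB ℝ X)
    (hrank : Module.finrank ℝ V.F = Module.finrank ℝ W.F)
    (L : ∀ x, V.E x →L[ℝ] W.E x) (hL : IsBundleMorphism V W L) :
    IsClosed (singularSet V W L) := by
  classical
  rw [← isOpen_compl_iff, isOpen_iff_forall_mem_open]
  intro x₀ hx₀
  have hbij : Function.Bijective (L x₀) := not_not.mp hx₀
  set e := trivializationAt V.F V.E x₀ with he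
  set e' := trivializationAt W.F W.E x₀ with he'
  set s := e.baseSet ∩ e'.baseSet with hsdef
  have hs_open : IsOpen s := e.open_baseSet.inter e'.open_baseSet
  have hx₀s : x₀ ∈ s :=
    ⟨mem_baseSet_trivializationAt V.F V.E x₀, mem_baseSet_trivializationAt W.F W.E x₀⟩
  have c : W.F ≃ₗ[ℝ] V.F := LinearEquiv.ofFinrankEq _ _ hrank.symm
  set m := Module.finrank ℝ V.F with hm
  set bV : Basis (Fin m) ℝ V.F := Module.finBasis ℝ V.F with hbV
  -- the matrix of the composed map in the trivializations
  set M : X → Matrix (Fin m) (Fin m) ℝ :=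
    fun x i j => bV.repr (c ((e' ⟨x, L x (e.symm x (bV j))⟩).2)) i with hM
  -- continuity of the matrix entries on s
  have hMc : ContinuousOn M s := by
    refine continuousOn_pi.mpr ?_; intro i
    rw [continuousOn_pi]; intro j
    have h1 : ContinuousOn (fun x => (⟨x, e.symm x (bV j)⟩ : TotalSpace V.F V.E)) s := by
      have := e.continuousOn_symm
      exact this.comp ((continuous_id.prodMk continuous_const).continuousOn)
        (fun x hx => ⟨hx.1, mem_univ _⟩)
    have h2 : ContinuousOn
        (fun x => (⟨x, L x (e.symm x (bV j))⟩ : TotalSpace W.F W.E)) s :=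
      hL.comp_continuousOn h1
    have h3 : ContinuousOn (fun x => (e' ⟨x, L x (e.symm x (bV j))⟩).2) s := by
      have := (e'.continuousOn.comp h2 (fun x hx => e'.mem_source.mpr hx.2)).snd
      exact this
    have h4 : Continuous (fun w : W.F => bV.repr (c w) i) := by
      exact ((bV.coord i).comp c.toLinearMap).continuous_of_finiteDimensional
    exact h4.comp_continuousOn h3
  have hdet : ContinuousOn (fun x => (M x).det) s :=
    (continuous_id.matrix_det).comp_continuousOn hMc
  -- pointwise characterization on s
  have hkey : ∀ x ∈ s, ((M x).det ≠ 0 ↔ Function.Bijective (L x)) := by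
    intro x hx
    have hxe : x ∈ e.baseSet := hx.1
    have hxe' : x ∈ e'.baseSet := hx.2
    set A := e.continuousLinearEquivAt ℝ x hxe with hA
    set A' := e'.continuousLinearEquivAt ℝ x hxe' with hA'
    set f : V.F →ₗ[ℝ] V.F :=
      c.toLinearMap ∘ₗ (A'.toLinearEquiv.toLinearMap ∘ₗ
        (((L x) : V.E x →ₗ[ℝ] W.E x) ∘ₗ A.symm.toLinearEquiv.toLinearMap)) with hf
    have hfx : ∀ v : V.F, f v = c (A' (L x (A.symm v))) := fun v => rfl
    have hsymm : ∀ v : V.F, A.symm v = e.symm x v := fun v => rfl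
    have hfor : ∀ z : W.E x, A' z = (e' ⟨x, z⟩).2 := fun z => rfl
    have hMf : M x = LinearMap.toMatrix bV bV f := by
      ext i j
      rw [LinearMap.toMatrix_apply]
      rw [hfx, hsymm, hfor]
    have hdetf : (M x).det = LinearMap.det f := by
      rw [hMf, LinearMap.det_toMatrix]
    rw [hdetf, ← bijective_iff_det_ne_zero]
    constructor
    · intro hbf
      have : ⇑(L x) = ⇑A'.symm ∘ ⇑c.symm ∘ ⇑f ∘ ⇑A := by
        funext v
        simp [hfx]
      rw [this]
      exact A'.symm.bijective.comp (c.symm.bijective.comp (hbf.comp A.bijective))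
    · intro hbL
      have : ⇑f = ⇑c ∘ ⇑A' ∘ ⇑(L x) ∘ ⇑A.symm := by funext v; rfl
      rw [this]
      exact c.bijective.comp (A'.bijective.comp (hbL.comp A.symm.bijective))
  -- conclude openness
  refine ⟨s ∩ (fun x => (M x).det) ⁻¹' ({0}ᶜ), ?_, ?_, ?_⟩
  · intro x hx
    have := (hkey x hx.1).mp hx.2
    exact not_not.mpr this
  · exact hdet.isOpen_inter_preimage hs_open (isOpen_compl_singleton)
  · exact ⟨hx₀s, (hkey x₀ hx₀s).mpr hbij⟩

/-- The pullback of a vector bundle along a continuous map, as a `VB`. -/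
noncomputable def VB.pullbackVB {Y Z : Type} [TopologicalSpace Y] [TopologicalSpace Z]
    (V : VB ℝ Z) (f : C(Y, Z)) : VB ℝ Y where
  F := V.F
  E := (f : Y → Z) *ᵖ V.E
  aE := fun y => inferInstanceAs (AddCommGroup (V.E (f y)))
  mE := fun y => inferInstanceAs (Module ℝ (V.E (f y)))
  tE := inferInstance
  tT := inferInstance
  fb := FiberBundle.pullback f
  vb := inferInstanceAs (VectorBundle ℝ V.F ((f : Y → Z) *ᵖ V.E))

/-- A map into the total space of a pullback bundle is continuous provided the compositions
with the projection and with the lift are. -/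
theorem continuous_into_pullback {B B' A : Type} [TopologicalSpace B] [TopologicalSpace B']
    [TopologicalSpace A] {F : Type} {E : B → Type} [TopologicalSpace (TotalSpace F E)]
    (f : B' → B) (g : A → TotalSpace F (f *ᵖ E))
    (h1 : Continuous fun a => (g a).proj)
    (h2 : Continuous fun a => Pullback.lift f (g a)) : Continuous g := by
  rw [continuous_iff_coinduced_le]
  show TopologicalSpace.coinduced g _ ≤ pullbackTopology F E f
  rw [pullbackTopology_def]
  refine le_inf ?_ ?_
  · exact continuous_iff_coinduced_le.mp (continuous_induced_rng.mpr h1)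
  · exact continuous_iff_coinduced_le.mp (continuous_induced_rng.mpr h2)

/-- Transport of non-vanishing along an equality of degrees. -/
theorem hcech_cast_ne_zero {R : Type} [CommRing R] [IsDomain R] [IsPrincipalIdealRing R]
    {G : Type} [AddCommGroup G] [Module R G] (T : Theory R G)
    (Y : Type) [TopologicalSpace Y] {a b : ℤ} (h : a = b) (x : T.Hcech Y a)
    (hx : x ≠ 0) : (h ▸ x : T.Hcech Y b) ≠ 0 := by
  subst h; exact hx

end Aux

/-- Let `X` be a closed topological manifold of dimension `n` and let
`L : E → F` be a bundle morphism between real vector bundles of the same fibre dimension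
over `X`, where `E` is orientable and `F` is non-orientable. Then the covering dimension of
`Σ(L)` is at least `n - 1`.
(A real vector bundle is orientable if and only if its first Stiefel–Whitney class
`w₁ ∈ H¹(X;ℤ₂)` is trivial; the first Stiefel–Whitney class is represented by an
`H¹(·;ℤ₂)`-valued characteristic class `w` together with this characterization for the two
bundles at hand.) -/
theorem covDim_ge_of_orientable_nonorientable
    (T : GoodTheory (ZMod 2) (ZMod 2))
    (n : ℕ) (X : Type) [TopologicalSpace X] [T2Space X]
    [ChartedSpace (EuclideanSpace ℝ (Fin n)) X] [CompactSpace X]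
    (V W : VB ℝ X) (hrank : Module.finrank ℝ V.F = Module.finrank ℝ W.F)
    (L : ∀ x, V.E x →L[ℝ] W.E x) (hL : IsBundleMorphism V W L)
    (w : CharClass T ℝ (1 : ℤ))
    (hwV : w.cls X V = 0 ↔ BundleOrientable V)
    (hwW : w.cls X W = 0 ↔ BundleOrientable W)
    (hV : BundleOrientable V) (hW : ¬ BundleOrientable W) :
    ((n - 1 : ℕ) : ℕ∞) ≤ covDim ↥(singularSet V W L) := by
  classical
  have hclosed : IsClosed (singularSet V W L) := isClosed_singularSet V W hrank L hL
  have hwV0 : w.cls X V = 0 := hwV.mpr hV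
  have hwW0 : w.cls X W ≠ 0 := fun h => hW (hwW.mp h)
  -- the restriction of w(W) to the complement of the singular set vanishes
  have hres : T.cmap (⟨Subtype.val, continuous_subtype_val⟩ :
      C(↥((singularSet V W L)ᶜ), X)) 1 (w.cls X W) = 0 := by
    set ι : C(↥((singularSet V W L)ᶜ), X) := ⟨Subtype.val, continuous_subtype_val⟩ with hιdef
    have hA : w.cls _ (V.pullbackVB ι) = T.cmap ι 1 (w.cls X V) :=
      w.natural _ _ (V.pullbackVB ι) V ι (fun _ => LinearEquiv.refl ℝ _)
        (Pullback.continuous_lift V.F V.E (⇑ι))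
    have hB : w.cls _ (W.pullbackVB ι) = T.cmap ι 1 (w.cls X W) :=
      w.natural _ _ (W.pullbackVB ι) W ι (fun _ => LinearEquiv.refl ℝ _)
        (Pullback.continuous_lift W.F W.E (⇑ι))
    have hC : w.cls _ (V.pullbackVB ι) = w.cls _ (W.pullbackVB ι) := by
      have hφbij : ∀ y : ↥((singularSet V W L)ᶜ), Function.Bijective (L y.val) := by
        intro y; exact not_not.mp y.2
      have hcont : Continuous (fun p : TotalSpace (V.pullbackVB ι).F (V.pullbackVB ι).E =>
          (⟨p.1, L p.1.val p.2⟩ : TotalSpace (W.pullbackVB ι).F (W.pullbackVB ι).E)) := by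
        apply continuous_into_pullback (E := W.E) (F := W.F) (⇑ι)
        · exact Pullback.continuous_proj V.F V.E (⇑ι)
        · exact hL.comp (Pullback.continuous_lift V.F V.E (⇑ι))
      have hnat := w.natural _ _ (V.pullbackVB ι) (W.pullbackVB ι)
        (ContinuousMap.id _)
        (fun y => LinearEquiv.ofBijective ((L y.val) : V.E y.val →ₗ[ℝ] W.E y.val)
          (hφbij y)) hcont
      rwa [T.cmap_id] at hnat
    rw [← hB, ← hC, hA, hwV0, map_zero]
  -- the Kronecker pairing against w(W) is non-trivial
  have hpair : T.pair X 1 (w.cls X W) ≠ 0 := by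
    intro h
    obtain ⟨z, hz⟩ := (T.uct_exact X 1 _).mp h
    have hzz : T.betaMap X 1 z = 0 := T.uct_free X 1 inferInstance z
    exact hwW0 (by rw [← hz, hzz])
  obtain ⟨ξ, hξ⟩ : ∃ ξ, T.pair X 1 (w.cls X W) ξ ≠ 0 := by
    by_contra h
    push_neg at h
    exact hpair (LinearMap.ext h)
  -- the image of ξ in H₁(X, X∖Σ) is non-zero
  have hπ : T.hmap (ContinuousMap.id X) (Set.mapsTo_empty _ _) 1 ξ ≠
      (0 : T.Hrel X (singularSet V W L)ᶜ 1) := by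
    intro h0
    obtain ⟨ζ, hζ⟩ := (T.les_exact X (singularSet V W L) 1 ξ).mp h0
    apply hξ
    rw [← hζ, ← T.pair_natural (⟨Subtype.val, continuous_subtype_val⟩ :
      C(↥((singularSet V W L)ᶜ), X)) 1 (w.cls X W) ζ, hres]
    simp
  -- Poincaré duality
  have horient : ROrientable T.toTheory n X := T.orient_two (by decide) n X
  obtain ⟨pdX, pdA, hpd⟩ := T.pd n X horient 1 (singularSet V W L) hclosed
  have hcc : T.ccmap (⟨Subtype.val, continuous_subtype_val⟩ :
      C(↥(singularSet V W L), X)) ((n : ℤ) - 1) (pdX.symm ξ) ≠ 0 := by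
    intro h0
    have hsq := hpd (pdX.symm ξ)
    rw [h0, map_zero, pdX.apply_symm_apply] at hsq
    exact hπ hsq.symm
  haveI : CompactSpace ↥(singularSet V W L) :=
    isCompact_iff_compactSpace.mp hclosed.isCompact
  rcases n with _ | m
  · simp
  · have hcast : ((m + 1 : ℕ) : ℤ) - 1 = (m : ℤ) := by push_cast; ring
    have hne := hcech_cast_ne_zero T.toTheory _ hcast _ hcc
    have hdim := T.dim_cech ↥(singularSet V W L) m ⟨_, hne⟩
    simpa using hdim

end
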